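/- arXiv:2006.10527 — 5 statements merged into one kernel-verified Lean document; each statement's English description precedes it below -/
import Mathlib

section
/- Let C be a noncatastrophic (n,k) convolutional code with parity-check matrix H(z) = Σ_{i=0}^ν H_i z^i, and let H_j^c be the lower block-triangular matrix with blocks (H_j^c)_{r,s} = H_{r−s} (with H_i = 0 for i > ν or i < 0), for 0 ≤ s ≤ r ≤ j. If d_j^c(C) = d, then none of the first n columns of H_j^c lies in the span of any other d−2 columns of H_j^c. -/
open Polynomial Matrix

/-- The `j`-th column distance of a convolutional code `C ⊆ F[z]^n`. -/
noncomputable def colDist {F : Type*} [Field F] [DecidableEq F] {n : ℕ}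
    (C : Submodule (Polynomial F) (Fin n → Polynomial F)) (j : ℕ) : ℕ :=
  sInf { d : ℕ | ∃ v ∈ C, (fun b => (v b).coeff 0) ≠ (0 : Fin n → F) ∧
    d = ∑ t ∈ Finset.range (j + 1), hammingNorm (fun b => (v b).coeff t) }

/-- Left primeness of a polynomial matrix `H ∈ F[z]^{m×n}`: any factorization `H = Y * B`
with `Y` square forces `Y` to be unimodular. -/
def LeftPrime {F : Type*} [Field F] {m n : ℕ}
    (H : Matrix (Fin m) (Fin n) (Polynomial F)) : Prop :=
  ∀ (Y : Matrix (Fin m) (Fin m) (Polynomial F))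
    (B : Matrix (Fin m) (Fin n) (Polynomial F)), H = Y * B → IsUnit Y

/-- The truncated sliding parity-check matrix `H_j^c`: the block lower-triangular matrix over
`F` whose `((r,a),(s,b))` entry is the coefficient `(H_{r-s})_{a,b}` of `H(z)` (and `0` for
`s > r`). -/
noncomputable def slideH {F : Type*} [Field F] {m n : ℕ}
    (H : Matrix (Fin m) (Fin n) (Polynomial F)) (j : ℕ) :
    Matrix (Fin (j + 1) × Fin m) (Fin (j + 1) × Fin n) F :=
  fun p q => if (q.1 : ℕ) ≤ (p.1 : ℕ) then (H p.2 q.2).coeff ((p.1 : ℕ) - (q.1 : ℕ)) else 0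

lemma sum_dite_fin {M : Type*} [AddCommMonoid M] {m r : ℕ} (hrm : r ≤ m) (g : Fin r → M) :
    (∑ i : Fin m, if h : (i : ℕ) < r then g ⟨i, h⟩ else 0) = ∑ i : Fin r, g i := by
  classical
  set f : ℕ → M := fun t => if h : t < r then g ⟨t, h⟩ else 0 with hf
  have h1 : (∑ i : Fin m, if h : (i : ℕ) < r then g ⟨i, h⟩ else 0) = ∑ t ∈ Finset.range m, f t := by
    rw [← Fin.sum_univ_eq_sum_range]
  have h2 : (∑ t ∈ Finset.range r, f t) = ∑ t ∈ Finset.range m, f t := by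
    refine Finset.sum_subset (Finset.range_subset_range.mpr hrm) ?_
    intro t _ ht
    have : ¬ t < r := by simpa using ht
    simp [hf, this]
  have h3 : (∑ t ∈ Finset.range r, f t) = ∑ i : Fin r, g i := by
    rw [← Fin.sum_univ_eq_sum_range]
    refine Finset.sum_congr rfl fun i _ => ?_
    simp [hf, i.isLt, Fin.eta]
  rw [h1, ← h2, h3]

/-- Left primeness makes `x ↦ H *ᵥ x` surjective over `F[z]`. -/
lemma surj_of_leftPrime {F : Type*} [Field F] {m n : ℕ}
    (H : Matrix (Fin m) (Fin n) (Polynomial F)) (hlp : LeftPrime H) :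
    ∀ u : Fin m → Polynomial F, ∃ x : Fin n → Polynomial F, H.mulVec x = u := by
  set M : Submodule F[X] (Fin m → F[X]) := LinearMap.range H.mulVecLin with hM
  obtain ⟨r, bN⟩ := M.basisOfPid (Pi.basisFun F[X] (Fin m))
  have hrm : r ≤ m := by
    have h1 : LinearIndependent F[X] (fun i : Fin r => (bN i : Fin m → F[X])) :=
      bN.linearIndependent.map' M.subtype (Submodule.ker_subtype M)
    have := h1.fintype_card_le_finrank
    simpa [Module.finrank_pi] using this
  have hcol : ∀ q : Fin n, (fun a => H a q) ∈ M := by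
    intro q
    refine ⟨Pi.single q 1, ?_⟩
    simp [Matrix.mulVecLin, Matrix.mulVec_single]
    rfl
  set Y : Matrix (Fin m) (Fin m) F[X] :=
    fun a i => if h : (i : ℕ) < r then (bN ⟨i, h⟩ : Fin m → F[X]) a else 0 with hY
  set B : Matrix (Fin m) (Fin n) F[X] :=
    fun i q => if h : (i : ℕ) < r then bN.repr ⟨_, hcol q⟩ ⟨i, h⟩ else 0 with hB
  have hfact : H = Y * B := by
    refine Matrix.ext fun a q => ?_
    have hrepr := bN.sum_repr ⟨_, hcol q⟩
    have hrepr' : (∑ i : Fin r, bN.repr ⟨_, hcol q⟩ i • (bN i : Fin m → F[X])) = fun a => H a q := by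
      have := congrArg Subtype.val hrepr
      simpa only [Submodule.coe_sum, Submodule.coe_smul] using this
    have key : (∑ i : Fin r, bN.repr ⟨_, hcol q⟩ i • (bN i : Fin m → F[X])) a = H a q := by
      rw [hrepr']
    have hsum : (∑ jj : Fin m, Y a jj * B jj q)
        = ∑ i : Fin r, bN.repr ⟨_, hcol q⟩ i • (bN i : Fin m → F[X]) a := by
      rw [← sum_dite_fin hrm (fun i : Fin r => bN.repr ⟨_, hcol q⟩ i • (bN i : Fin m → F[X]) a)]
      refine Finset.sum_congr rfl fun i _ => ?_
      by_cases h : (i : ℕ) < r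
      · simp [hY, hB, dif_pos h, smul_eq_mul, mul_comm]
      · simp [hY, hB, dif_neg h]
    rw [Matrix.mul_apply, hsum, ← key, Finset.sum_apply]
    refine Finset.sum_congr rfl fun i _ => ?_
    simp
  have hunit : IsUnit Y := hlp Y B hfact
  have hYcol : ∀ x : Fin m → F[X], Y.mulVec x ∈ M := by
    intro x
    have hx : Y.mulVec x = ∑ i : Fin m, x i • (fun a => Y a i) := by
      ext a
      simp [Matrix.mulVec, dotProduct, Finset.sum_apply, mul_comm]
    rw [hx]
    refine Submodule.sum_mem M fun i _ => Submodule.smul_mem M _ ?_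
    by_cases h : (i : ℕ) < r
    · have he : (fun a => Y a i) = (bN ⟨i, h⟩ : Fin m → F[X]) := by
        ext a; simp [hY, dif_pos h]
      rw [he]; exact (bN ⟨i, h⟩).2
    · have he : (fun a => Y a i) = (0 : Fin m → F[X]) := by
        ext a; simp [hY, dif_neg h]
      rw [he]; exact Submodule.zero_mem M
  intro u
  obtain ⟨Z, hZ⟩ := hunit.exists_right_inv
  have hu : u ∈ M := by
    have h2 : Y.mulVec (Z.mulVec u) = u := by
      rw [Matrix.mulVec_mulVec, hZ, Matrix.one_mulVec]
    rw [← h2]; exact hYcol _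
  obtain ⟨x, hx⟩ := hu
  exact ⟨x, hx⟩

theorem first_columns_not_in_span {F : Type*} [Field F] [DecidableEq F] {m n ν j d : ℕ}
    (H : Matrix (Fin m) (Fin n) (Polynomial F))
    (hdeg : ∀ a b, (H a b).natDegree ≤ ν)
    (hfrr : Function.Injective fun x : Fin m → Polynomial F => Matrix.vecMul x H)
    (hlp : LeftPrime H)
    (hd : colDist (LinearMap.ker H.mulVecLin) j = d) :
    ∀ b : Fin n, ∀ S : Finset (Fin (j + 1) × Fin n),
      S.card + 2 ≤ d → ((0 : Fin (j + 1)), b) ∉ S →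
      (fun p => slideH H j p ((0 : Fin (j + 1)), b)) ∉
        Submodule.span F ((fun q => fun p => slideH H j p q) '' (S : Set (Fin (j + 1) × Fin n))) := by
  classical
  intro b S hcard hbS hspan
  rw [Finsupp.mem_span_image_iff_linearCombination] at hspan
  obtain ⟨l, hlsupp, hl⟩ := hspan
  rw [Finsupp.mem_supported] at hlsupp
  -- the combined coefficient vector
  set w : Fin (j + 1) × Fin n → F :=
    fun q => if q = ((0 : Fin (j + 1)), b) then -1 else l q with hwdef
  have hwzero : ∀ q, q ∉ insert ((0 : Fin (j + 1)), b) S → w q = 0 := by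
    intro q hq
    rw [Finset.mem_insert] at hq
    push_neg at hq
    simp only [hwdef]
    rw [if_neg hq.1]
    by_contra h
    exact hq.2 (hlsupp (Finsupp.mem_support_iff.mpr h))
  have hw : ∀ p, ∑ q : Fin (j + 1) × Fin n, w q * slideH H j p q = 0 := by
    intro p
    have hsub : ∑ q : Fin (j + 1) × Fin n, w q * slideH H j p q
        = ∑ q ∈ insert ((0 : Fin (j + 1)), b) S, w q * slideH H j p q := by
      refine (Finset.sum_subset (Finset.subset_univ _) ?_).symm
      intro q _ hq
      rw [hwzero q hq, zero_mul]
    have hlS : (Finsupp.linearCombination F (fun q => fun p => slideH H j p q)) l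
        = ∑ q ∈ S, l q • (fun p => slideH H j p q) :=
      Finsupp.linearCombination_apply_of_mem_supported F hlsupp
    have hS : ∑ q ∈ S, l q * slideH H j p q = slideH H j p ((0 : Fin (j + 1)), b) := by
      have := congrFun (hl.symm.trans hlS) p
      simpa [Finset.sum_apply] using this.symm
    rw [hsub, Finset.sum_insert hbS]
    have : ∑ q ∈ S, w q * slideH H j p q = ∑ q ∈ S, l q * slideH H j p q := by
      refine Finset.sum_congr rfl fun q hq => ?_
      have : q ≠ ((0 : Fin (j + 1)), b) := fun h => hbS (h ▸ hq)
      simp only [hwdef]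
      rw [if_neg this]
    rw [this, hS]
    simp only [hwdef, if_true]
    ring
  -- build the truncated codeword
  set W : ℕ → Fin n → F := fun t b' => if h : t < j + 1 then w (⟨t, h⟩, b') else 0 with hW
  set v : Fin n → Polynomial F := fun b' => ∑ t ∈ Finset.range (j+1), C (W t b') * X ^ t with hv
  have hcoeff : ∀ b' t, (v b').coeff t = W t b' := by
    intro b' t
    rw [hv]
    simp only [finset_sum_coeff, coeff_C_mul, coeff_X_pow, mul_ite, mul_one, mul_zero]
    rw [Finset.sum_ite_eq]
    by_cases ht : t < j + 1
    · simp [Finset.mem_range, ht]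
    · simp [Finset.mem_range, ht, hW]
      intro h; omega
  have hHv : ∀ (a : Fin m) (t : ℕ), t < j + 1 → (H.mulVec v a).coeff t = 0 := by
    intro a t ht
    have step1 : (H.mulVec v a).coeff t
        = ∑ b', ∑ s ∈ Finset.range (t+1), (H a b').coeff (t - s) * W s b' := by
      rw [Matrix.mulVec, dotProduct, finset_sum_coeff]
      refine Finset.sum_congr rfl fun b' _ => ?_
      rw [coeff_mul, Finset.Nat.sum_antidiagonal_eq_sum_range_succ
        (fun x y => (H a b').coeff x * (v b').coeff y)]
      rw [← Finset.sum_range_reflect]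
      refine Finset.sum_congr rfl fun s hs => ?_
      rw [Finset.mem_range] at hs
      have h1 : t + 1 - 1 - s = t - s := by omega
      have h2 : t - (t - s) = s := by omega
      rw [h1, h2, hcoeff]
    have step2 : ∑ q : Fin (j+1) × Fin n, w q * slideH H j (⟨t, ht⟩, a) q
        = ∑ s ∈ Finset.range (t+1), ∑ b', (H a b').coeff (t - s) * W s b' := by
      rw [Fintype.sum_prod_type]
      set G : ℕ → F := fun s => if s ≤ t then ∑ b', (H a b').coeff (t - s) * W s b' else 0 with hG
      have e1 : ∀ s : Fin (j+1), ∑ b', w (s, b') * slideH H j (⟨t, ht⟩, a) (s, b') = G s := by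
        intro s
        by_cases hst : (s : ℕ) ≤ t
        · simp only [hG]
          rw [if_pos hst]
          refine Finset.sum_congr rfl fun b' _ => ?_
          rw [slideH, if_pos hst, mul_comm]
          congr 1
          rw [hW]
          simp [s.isLt]
        · simp only [hG]
          rw [if_neg hst]
          rw [Finset.sum_eq_zero]
          intro b' _
          rw [slideH]
          simp only [if_neg hst, mul_zero]
      rw [Finset.sum_congr rfl fun s _ => e1 s, Fin.sum_univ_eq_sum_range G]
      rw [← Finset.sum_subset (Finset.range_subset_range.mpr ht)]
      · refine Finset.sum_congr rfl fun s hs => ?_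
        rw [Finset.mem_range] at hs
        simp only [hG]; simp [Nat.lt_succ_iff.mp hs]
      · intro s _ hs
        rw [Finset.mem_range, Nat.lt_succ_iff] at hs
        simp only [hG]; simp [hs]
    rw [step1, Finset.sum_comm, ← step2, hw]
  -- divide off X^(j+1) and correct v to a genuine codeword
  have hdvd : ∀ a : Fin m, (X : Polynomial F) ^ (j + 1) ∣ H.mulVec v a := by
    intro a
    rw [Polynomial.X_pow_dvd_iff]
    exact fun t ht => hHv a t ht
  choose u hu using hdvd
  obtain ⟨x, hx⟩ := surj_of_leftPrime H hlp u
  set v' : Fin n → Polynomial F := v - (X : Polynomial F) ^ (j + 1) • x with hv'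
  have hker : v' ∈ LinearMap.ker H.mulVecLin := by
    rw [LinearMap.mem_ker, Matrix.mulVecLin_apply, hv']
    have : H.mulVec (v - (X : Polynomial F) ^ (j + 1) • x)
        = H.mulVec v - (X : Polynomial F) ^ (j + 1) • H.mulVec x := by
      rw [Matrix.mulVec_sub, Matrix.mulVec_smul]
    rw [this, hx]
    ext a
    simp [hu a, mul_comm]
  have hcoeff' : ∀ b' t, t < j + 1 → (v' b').coeff t = W t b' := by
    intro b' t ht
    rw [hv']
    simp only [Pi.sub_apply, Pi.smul_apply, smul_eq_mul, Polynomial.coeff_sub]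
    rw [(commute_X_pow (x b') (j + 1)).eq, Polynomial.coeff_mul_X_pow']
    rw [if_neg (by omega), sub_zero, hcoeff]
  -- the weight of v' is in the colDist set
  have hne : (fun b' => (v' b').coeff 0) ≠ (0 : Fin n → F) := by
    intro h
    have := congrFun h b
    rw [hcoeff' b 0 (by omega)] at this
    have hWw : W 0 b = -1 := by
      simp only [hW, hwdef]
      rw [dif_pos (Nat.zero_lt_succ j)]
      rw [if_pos (by simp [Prod.ext_iff, Fin.ext_iff])]
    rw [hWw] at this
    simp only [Pi.zero_apply] at this
    exact one_ne_zero (neg_eq_zero.mp this)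
  set wsum : ℕ := ∑ t ∈ Finset.range (j + 1), hammingNorm (fun b' => (v' b').coeff t) with hwsum
  have hmem : wsum ∈ { e : ℕ | ∃ v ∈ LinearMap.ker H.mulVecLin,
      (fun b => (v b).coeff 0) ≠ (0 : Fin n → F) ∧
      e = ∑ t ∈ Finset.range (j + 1), hammingNorm (fun b => (v b).coeff t) } :=
    ⟨v', hker, hne, rfl⟩
  have hdle : d ≤ wsum := by
    rw [← hd]
    exact Nat.sInf_le hmem
  -- the weight bound
  have hbound : wsum ≤ S.card + 1 := by
    have hnorm : ∀ (x : Fin n → F), hammingNorm x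
        = ∑ b' : Fin n, (if x b' ≠ 0 then 1 else 0) := by
      intro x
      rw [hammingNorm, Finset.card_filter]
    have e1 : wsum = ∑ s : Fin (j + 1), ∑ b' : Fin n, (if w (s, b') ≠ 0 then 1 else 0) := by
      rw [hwsum, ← Fin.sum_univ_eq_sum_range
        (fun t => hammingNorm (fun b' => (v' b').coeff t))]
      refine Finset.sum_congr rfl fun s _ => ?_
      rw [hnorm]
      refine Finset.sum_congr rfl fun b' _ => ?_
      congr 1
      rw [hcoeff' b' s s.isLt]
      simp only [hW]
      rw [dif_pos s.isLt]
    have e2 : (∑ s : Fin (j + 1), ∑ b' : Fin n, (if w (s, b') ≠ 0 then 1 else 0))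
        = (Finset.univ.filter fun q : Fin (j + 1) × Fin n => w q ≠ 0).card := by
      rw [Finset.card_filter, Fintype.sum_prod_type]
    have e3 : (Finset.univ.filter fun q : Fin (j + 1) × Fin n => w q ≠ 0)
        ⊆ insert ((0 : Fin (j + 1)), b) S := by
      intro q hq
      rw [Finset.mem_filter] at hq
      by_contra h
      exact hq.2 (hwzero q h)
    calc wsum = (Finset.univ.filter fun q : Fin (j + 1) × Fin n => w q ≠ 0).card := by
            rw [e1, e2]
      _ ≤ (insert ((0 : Fin (j + 1)), b) S).card := Finset.card_le_card e3
      _ ≤ S.card + 1 := Finset.card_insert_le _ _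
  omega
end

section
/- Let G(z) ∈ F[z]^{n×k} be a full column rank polynomial matrix, written G(z) = G̃(z)X(z) where G̃(z) ∈ F[z]^{n×k} is right prime and X(z) ∈ F[z]^{k×k} is nonsingular. Then the code C̃ = Im_{F[z]} G̃(z) is the smallest noncatastrophic convolutional code containing C = Im_{F[z]} G(z): that is, C ⊆ C̃, C̃ is noncatastrophic, and any noncatastrophic (n,k) convolutional code containing C also contains C̃. -/
open Polynomial Matrix

/-- Right primeness of a polynomial matrix. -/
def RightPrime {F : Type*} [Field F] {n k : ℕ}
    (G : Matrix (Fin n) (Fin k) (Polynomial F)) : Prop :=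
  ∀ (B : Matrix (Fin n) (Fin k) (Polynomial F))
    (X : Matrix (Fin k) (Fin k) (Polynomial F)), G = B * X → IsUnit X

/-- A submodule `D ⊆ F[z]^n` is a noncatastrophic `(n,κ)` convolutional code for some `κ`
if it admits a full column rank right prime generator matrix. -/
def IsNoncatCode {F : Type*} [Field F] {n : ℕ}
    (D : Submodule (Polynomial F) (Fin n → Polynomial F)) : Prop :=
  ∃ (κ : ℕ) (G : Matrix (Fin n) (Fin κ) (Polynomial F)),
    Function.Injective G.mulVecLin ∧ LinearMap.range G.mulVecLin = D ∧ RightPrime G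

/-- The range of a right prime full column rank matrix is saturated. -/
theorem rightPrime_saturated {F : Type*} [Field F] {n κ : ℕ}
    (H : Matrix (Fin n) (Fin κ) (Polynomial F))
    (hinj : Function.Injective H.mulVecLin) (hp : RightPrime H)
    {d : Polynomial F} (hd : d ≠ 0) {v : Fin n → Polynomial F}
    (hv : d • v ∈ LinearMap.range H.mulVecLin) :
    v ∈ LinearMap.range H.mulVecLin := by
  by_contra hvn
  set D0 : Submodule (Polynomial F) (Fin n → Polynomial F) := LinearMap.range H.mulVecLin
    with hD0
  set D' : Submodule (Polynomial F) (Fin n → Polynomial F) := D0 ⊔ Submodule.span (Polynomial F) {v} with hD'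
  have hvD' : v ∈ D' := le_sup_right (α := Submodule (Polynomial F) (Fin n → Polynomial F))
    (Submodule.mem_span_singleton_self v)
  have hD0D' : D0 ≤ D' := le_sup_left
  obtain ⟨m, b⟩ := Submodule.basisOfPid (Pi.basisFun (Polynomial F) (Fin n)) D'
  -- columns of H are linearly independent
  have hcolH : LinearIndependent (Polynomial F) (fun j => Hᵀ j) :=
    Matrix.mulVec_injective_iff.mp hinj
  have hcolmem : ∀ j, Hᵀ j ∈ D' := by
    intro j
    apply hD0D'
    exact ⟨Pi.single j 1, Matrix.mulVec_single_one H j⟩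
  -- κ ≤ m
  have hκm : κ ≤ m := by
    have : LinearIndependent (Polynomial F) (fun j => (⟨Hᵀ j, hcolmem j⟩ : D')) := by
      apply LinearIndependent.of_comp D'.subtype
      exact hcolH
    simpa using b.card_le_card_of_linearIndependent this
  -- m ≤ κ : multiplication by d maps D' into D0, injectively
  have hmκ : m ≤ κ := by
    have hsm : ∀ x ∈ D', d • x ∈ D0 := by
      intro x hx
      have : D' ≤ Submodule.comap (d • (LinearMap.id : (Fin n → Polynomial F) →ₗ[Polynomial F] (Fin n → Polynomial F))) D0 := by
        rw [hD']
        apply sup_le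
        · intro y hy
          exact D0.smul_mem d hy
        · rw [Submodule.span_le]
          rintro y rfl
          exact hv
      exact this hx
    let φ : D' →ₗ[Polynomial F] D0 :=
      ((d • (LinearMap.id : (Fin n → Polynomial F) →ₗ[Polynomial F] (Fin n → Polynomial F))).comp
        D'.subtype).codRestrict D0 (fun x => hsm x x.2)
    have hφinj : Function.Injective φ := by
      intro x y hxy
      have h1 : d • (x : Fin n → Polynomial F) = d • (y : Fin n → Polynomial F) :=
        congrArg Subtype.val hxy
      exact Subtype.ext (smul_right_injective (Fin n → Polynomial F) hd h1)
    have hli : LinearIndependent (Polynomial F) (fun i => φ (b i)) :=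
      b.linearIndependent.map' φ (LinearMap.ker_eq_bot.mpr hφinj)
    have bD0 : Module.Basis (Fin κ) (Polynomial F) D0 :=
      (Pi.basisFun (Polynomial F) (Fin κ)).map (LinearEquiv.ofInjective H.mulVecLin hinj)
    simpa using bD0.card_le_card_of_linearIndependent hli
  have hmk : m = κ := le_antisymm hmκ hκm
  subst hmk
  -- the matrix of the basis of D'
  set B : Matrix (Fin n) (Fin m) (Polynomial F) :=
    Matrix.of (fun i j => (b j : Fin n → Polynomial F) i) with hB
  have hrangeB : LinearMap.range B.mulVecLin = D' := by
    rw [Matrix.range_mulVecLin]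
    have : Set.range B.col = D'.subtype '' Set.range b := by
      rw [← Set.range_comp]
      rfl
    rw [this, ← Submodule.map_span, b.span_eq, Submodule.map_top, Submodule.range_subtype]
  -- H = B * X'
  set X' : Matrix (Fin m) (Fin m) (Polynomial F) :=
    Matrix.of (fun l j => b.repr ⟨Hᵀ j, hcolmem j⟩ l) with hX'
  have hfac : H = B * X' := by
    refine Matrix.ext fun i j => ?_
    have h2 : ((∑ l, b.repr ⟨Hᵀ j, hcolmem j⟩ l • b l : D') : Fin n → Polynomial F) i
        = Hᵀ j i := by rw [b.sum_repr ⟨Hᵀ j, hcolmem j⟩]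
    have h3 : H i j = Hᵀ j i := rfl
    rw [Matrix.mul_apply, h3, ← h2]
    simp only [AddSubmonoidClass.coe_finset_sum, SetLike.val_smul, Finset.sum_apply,
      Pi.smul_apply, smul_eq_mul, hB, hX', Matrix.of_apply]
    exact Finset.sum_congr rfl fun l _ => mul_comm _ _
  have hXu : IsUnit X' := hp B X' hfac
  obtain ⟨u, hu⟩ := hXu
  have hBH : B = H * (↑u⁻¹ : Matrix (Fin m) (Fin m) (Polynomial F)) := by
    rw [hfac, ← hu, Matrix.mul_assoc, ← Units.val_mul, mul_inv_cancel, Units.val_one,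
      Matrix.mul_one]
  have hle : D' ≤ D0 := by
    rw [← hrangeB, hD0, hBH, Matrix.mulVecLin_mul]
    exact LinearMap.range_comp_le_range _ _
  exact hvn (hle hvD')

/-- If `G = G̃ * X` with `G̃` right prime (full column rank) and `X`
nonsingular, then `C̃ = Im G̃` is the smallest noncatastrophic convolutional code
containing `C = Im G`: `C ⊆ C̃`, `C̃` is noncatastrophic, and every noncatastrophic
convolutional code containing `C` contains `C̃`. -/
theorem smallest_noncatastrophic_code {F : Type*} [Field F] {n k : ℕ}
    (G Gt : Matrix (Fin n) (Fin k) (Polynomial F))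
    (X : Matrix (Fin k) (Fin k) (Polynomial F))
    (hG : Function.Injective G.mulVecLin)
    (hGt : Function.Injective Gt.mulVecLin)
    (hprime : RightPrime Gt)
    (hX : X.det ≠ 0)
    (hfac : G = Gt * X) :
    LinearMap.range G.mulVecLin ≤ LinearMap.range Gt.mulVecLin ∧
    IsNoncatCode (LinearMap.range Gt.mulVecLin) ∧
    (∀ D : Submodule (Polynomial F) (Fin n → Polynomial F), IsNoncatCode D →
      LinearMap.range G.mulVecLin ≤ D → LinearMap.range Gt.mulVecLin ≤ D) := by
  refine ⟨?_, ⟨k, Gt, hGt, rfl, hprime⟩, ?_⟩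
  · rw [hfac, Matrix.mulVecLin_mul]
    exact LinearMap.range_comp_le_range _ _
  · rintro D ⟨κ, H, hHinj, hHrange, hHp⟩ hle
    rintro _ ⟨w, rfl⟩
    have key : X.det • Gt.mulVecLin w = G.mulVecLin (X.adjugate.mulVec w) := by
      simp only [Matrix.mulVecLin_apply, Matrix.mulVec_mulVec, hfac, Matrix.mul_assoc,
        Matrix.mul_adjugate, Matrix.mul_smul, Matrix.mul_one, Matrix.smul_mulVec]
    have hmem : X.det • Gt.mulVecLin w ∈ D := by
      rw [key]
      exact hle ⟨X.adjugate.mulVec w, rfl⟩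
    rw [← hHrange] at hmem ⊢
    exact rightPrime_saturated H hHinj hHp hX hmem
end

section
/- Let C be an (n,k) noncatastrophic convolutional code with j-th column distance d. If in a sliding window of coefficient vectors v_t, ..., v_{t+j} at most d−1 components are erased and all preceding symbols v_0, ..., v_{t−1} are correctly known, then the erased components of v_t can be uniquely recovered. -/
open Polynomial Matrix

/-- Let `C = Ker H(z)` be a noncatastrophic convolutional code with `j`-th
column distance `d`. If in the sliding window of coefficients `v_t, …, v_{t+j}` at most
`d − 1` components are erased (erasure positions `E`, `|E| ≤ d − 1`) and all preceding
symbols `v_0, …, v_{t−1}` are correctly known, then the erased components of `v_t` are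
uniquely recovered: any two such codewords have the same coefficient `v_t`. -/
theorem window_recovery_of_first_block {F : Type*} [Field F] [DecidableEq F] {m n ν j t d : ℕ}
    (H : Matrix (Fin m) (Fin n) (Polynomial F))
    (hdeg : ∀ a b, (H a b).natDegree ≤ ν)
    (hfrr : Function.Injective fun x : Fin m → Polynomial F => Matrix.vecMul x H)
    (hlp : LeftPrime H)
    (hd : colDist (LinearMap.ker H.mulVecLin) j = d)
    (E : Finset (Fin (j + 1) × Fin n))
    (hcard : E.card + 1 ≤ d) :
    ∀ v w : Fin n → Polynomial F, H.mulVec v = 0 → H.mulVec w = 0 →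
      (∀ b : Fin n, ∀ s : ℕ, s < t → (v b).coeff s = (w b).coeff s) →
      (∀ s : Fin (j + 1), ∀ b : Fin n, (s, b) ∉ E →
        (v b).coeff (t + s) = (w b).coeff (t + s)) →
      ∀ b : Fin n, (v b).coeff t = (w b).coeff t := by
  intro v w hv hw hpast hwin b0
  by_contra hb0
  set u : Fin n → Polynomial F := fun b => v b - w b with hu
  have hu0 : H.mulVec u = 0 := by
    have : H.mulVec u = H.mulVec v - H.mulVec w := Matrix.mulVec_sub H v w
    rw [this, hv, hw, sub_zero]
  have hlow : ∀ b, (X : Polynomial F) ^ t ∣ u b := by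
    intro b
    rw [Polynomial.X_pow_dvd_iff]
    intro s hs
    simp [hu, hpast b s hs]
  choose q hq using hlow
  -- coefficients of q
  have hqc : ∀ b s, (q b).coeff s = (u b).coeff (t + s) := by
    intro b s
    rw [hq b, add_comm t s, Polynomial.coeff_X_pow_mul]
  -- q is in the kernel
  have hq0 : H.mulVec q = 0 := by
    funext a
    have h1 : (X : Polynomial F) ^ t * (H.mulVec q a) = 0 := by
      have : H.mulVec u a = (X : Polynomial F) ^ t * H.mulVec q a := by
        simp only [Matrix.mulVec, dotProduct, hq, Finset.mul_sum]
        exact Finset.sum_congr rfl fun b _ => by ring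
      rw [← this, hu0]; rfl
    have hX : (X : Polynomial F) ^ t ≠ 0 := pow_ne_zero _ Polynomial.X_ne_zero
    exact (mul_eq_zero.mp h1).resolve_left hX
  -- q has nonzero 0-th coefficient
  have hq0c : (fun b => (q b).coeff 0) ≠ (0 : Fin n → F) := by
    intro h
    apply hb0
    have := congrFun h b0
    simp only [hqc b0 0, Nat.add_zero] at this
    have : (u b0).coeff t = 0 := this
    simpa [hu, sub_eq_zero] using this
  -- the weight is in the colDist set
  set W : ℕ := ∑ s ∈ Finset.range (j + 1), hammingNorm (fun b => (q b).coeff s) with hW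
  have hmem : W ∈ { d : ℕ | ∃ v ∈ LinearMap.ker H.mulVecLin,
      (fun b => (v b).coeff 0) ≠ (0 : Fin n → F) ∧
      d = ∑ s ∈ Finset.range (j + 1), hammingNorm (fun b => (v b).coeff s) } := by
    exact ⟨q, by simpa [Matrix.mulVecLin] using hq0, hq0c, rfl⟩
  have hdW : d ≤ W := by
    rw [← hd]
    exact Nat.sInf_le hmem
  -- W ≤ E.card
  have hWE : W ≤ E.card := by
    have hcardsum : E.card = ∑ s ∈ Finset.range (j + 1),
        (E.filter fun p => (p.1 : ℕ) = s).card := by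
      apply Finset.card_eq_sum_card_fiberwise
      intro p _
      exact Finset.mem_range.mpr p.1.isLt
    rw [hcardsum, hW]
    apply Finset.sum_le_sum
    intro s hs
    have hs' : s < j + 1 := Finset.mem_range.mp hs
    unfold hammingNorm
    apply Finset.card_le_card_of_injOn (fun b => ((⟨s, hs'⟩ : Fin (j + 1)), b))
    · intro b hb
      simp only [Finset.mem_coe, Finset.mem_filter, Finset.mem_univ, true_and] at hb
      refine Finset.mem_filter.mpr ⟨?_, rfl⟩
      by_contra hE
      apply hb
      rw [hqc]
      have := hwin ⟨s, hs'⟩ b hE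
      simp only [hu]
      simpa [sub_eq_zero] using this
    · intro a _ b _ hab
      exact (Prod.mk.injEq _ _ _ _).mp hab |>.2
  omega
end

section
/- Let C be an (n,k,δ) MDP convolutional code and L = ⌊δ/k⌋ + ⌊δ/(n−k)⌋. If in every sliding window of length (L+1)n at most (L+1)(n−k) symbols are erased, then full recovery of all erasures from left to right is possible. -/
open Polynomial Matrix

/-- A right prime matrix has injective constant term: if the constant coefficient
matrix kills a constant vector, that vector is zero. -/
lemma rightPrime_coeffZero_injective {F : Type*} [Field F] [DecidableEq F] {n k : ℕ}
    (G : Matrix (Fin n) (Fin k) (Polynomial F)) (hprime : RightPrime G)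
    (c : Fin k → F) (hc : ∀ b, ∑ i, (G b i).coeff 0 * c i = 0) : c = 0 := by
  by_contra hc0
  obtain ⟨j, hj⟩ : ∃ j, c j ≠ 0 := by
    by_contra h
    push_neg at h
    exact hc0 (funext h)
  -- Y : identity with column j replaced by the constant vector c
  set Y : Matrix (Fin k) (Fin k) (Polynomial F) :=
    (1 : Matrix (Fin k) (Fin k) (Polynomial F)).updateCol j (fun i => C (c i)) with hY
  have hdetY : Y.det = C (c j) := by
    have := Matrix.cramer_apply (1 : Matrix (Fin k) (Fin k) (Polynomial F))
      (fun i => C (c i)) j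
    rw [hY, ← this, Matrix.cramer_one]
    rfl
  have hYunit : IsUnit Y.det := by
    rw [hdetY, Polynomial.isUnit_C]
    exact isUnit_iff_ne_zero.mpr hj
  -- column j of G * Y is divisible by X
  have hdvd : ∀ b, (X : Polynomial F) ∣ (G * Y) b j := by
    intro b
    rw [Polynomial.X_dvd_iff]
    have : (G * Y) b j = ∑ i, G b i * C (c i) := by
      simp [Matrix.mul_apply, hY, Matrix.updateCol_self]
    rw [this, Polynomial.finset_sum_coeff]
    have : ∀ i, (G b i * C (c i)).coeff 0 = (G b i).coeff 0 * c i := by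
      intro i; rw [Polynomial.coeff_mul_C]
    rw [Finset.sum_congr rfl fun i _ => this i]
    exact hc b
  set B : Matrix (Fin n) (Fin k) (Polynomial F) :=
    fun b i => if i = j then (hdvd b).choose else (G * Y) b i with hB
  set D : Matrix (Fin k) (Fin k) (Polynomial F) :=
    Matrix.diagonal (fun i => if i = j then (X : Polynomial F) else 1) with hD
  have hGY : G * Y = B * D := by
    refine Matrix.ext fun b i => ?_
    rw [hD, Matrix.mul_diagonal]
    by_cases hij : i = j
    · subst hij
      simp only [hB, if_pos rfl, Matrix.diagonal_apply_eq]
      rw [mul_comm]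
      exact (hdvd b).choose_spec
    · simp [hB, hij]
  have hG' : G = B * (D * Y⁻¹) := by
    calc G = G * (Y * Y⁻¹) := by rw [Matrix.mul_nonsing_inv Y hYunit, Matrix.mul_one]
    _ = (G * Y) * Y⁻¹ := by rw [Matrix.mul_assoc]
    _ = (B * D) * Y⁻¹ := by rw [hGY]
    _ = B * (D * Y⁻¹) := by rw [Matrix.mul_assoc]
  have hUnit : IsUnit (D * Y⁻¹) := hprime B (D * Y⁻¹) hG'
  have hDunit : IsUnit D := by
    have h1 : IsUnit Y := (Matrix.isUnit_iff_isUnit_det Y).mpr hYunit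
    have := hUnit.mul h1
    rwa [Matrix.mul_assoc, Matrix.nonsing_inv_mul Y hYunit, Matrix.mul_one] at this
  have hdetD : D.det = (X : Polynomial F) := by
    rw [hD, Matrix.det_diagonal]
    rw [Finset.prod_eq_single j (fun i _ hi => by simp [hi]) (by simp)]
    simp
  have : IsUnit (X : Polynomial F) := by
    rw [← hdetD]
    exact hDunit.map (Matrix.detMonoidHom)
  exact Polynomial.not_isUnit_X this

/-- If all coefficients of `G *ᵥ x` below `m` vanish, then `x` is divisible by `X^m`. -/
lemma rightPrime_div_pow {F : Type*} [Field F] [DecidableEq F] {n k : ℕ}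
    (G : Matrix (Fin n) (Fin k) (Polynomial F)) (hprime : RightPrime G) :
    ∀ (m : ℕ) (x : Fin k → Polynomial F),
      (∀ b t, t < m → (G.mulVec x b).coeff t = 0) →
      ∃ x' : Fin k → Polynomial F, ∀ i, x i = (X : Polynomial F) ^ m * x' i := by
  intro m
  induction m with
  | zero =>
    intro x _
    refine ⟨x, fun i => ?_⟩
    simp
  | succ m ih =>
    intro x hx
    -- first divide once by X
    have hc : ∀ b, ∑ i, (G b i).coeff 0 * (x i).coeff 0 = 0 := by
      intro b
      have h0 := hx b 0 (Nat.succ_pos m)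
      simp only [Matrix.mulVec, dotProduct, Polynomial.finset_sum_coeff] at h0
      calc ∑ i, (G b i).coeff 0 * (x i).coeff 0
          = ∑ i, (G b i * x i).coeff 0 := by
            exact Finset.sum_congr rfl fun i _ => (Polynomial.mul_coeff_zero _ _).symm
        _ = 0 := h0
    have hc0 : (fun i => (x i).coeff 0) = 0 :=
      rightPrime_coeffZero_injective G hprime _ hc
    have hdvd : ∀ i, (X : Polynomial F) ∣ x i := by
      intro i
      rw [Polynomial.X_dvd_iff]
      exact congrFun hc0 i
    set x₁ : Fin k → Polynomial F := fun i => (hdvd i).choose with hx₁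
    have hx₁spec : ∀ i, x i = (X : Polynomial F) * x₁ i := fun i => (hdvd i).choose_spec
    have hmv : ∀ b, G.mulVec x b = (X : Polynomial F) * G.mulVec x₁ b := by
      intro b
      simp only [Matrix.mulVec, dotProduct]
      rw [Finset.mul_sum]
      exact Finset.sum_congr rfl fun i _ => by rw [hx₁spec i]; ring
    have hx₁coeff : ∀ b t, t < m → (G.mulVec x₁ b).coeff t = 0 := by
      intro b t ht
      have := hx b (t + 1) (by omega)
      rw [hmv b, Polynomial.coeff_X_mul] at this
      exact this
    obtain ⟨x', hx'⟩ := ih x₁ hx₁coeff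
    refine ⟨x', fun i => ?_⟩
    rw [hx₁spec i, hx' i, pow_succ]
    ring

/-- Let `C = Im G` be an `(n,k,δ)` MDP convolutional code (noncatastrophic,
`d_j^c = (n−k)(j+1)+1` for `j ≤ L`, `L = ⌊δ/k⌋ + ⌊δ/(n−k)⌋`, `δ` the maximal degree of the
full-size minors of `G`). If in every sliding window of `L+1` consecutive coefficient
vectors (i.e. `(L+1)n` symbols) at most `(L+1)(n−k)` symbols are erased, then full
recovery of all erasures from left to right is possible: any two codewords agreeing on
all non-erased positions are equal. -/
theorem mdp_full_recovery {F : Type*} [Field F] [DecidableEq F] {n k δ L : ℕ}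
    (hk0 : 0 < k) (hk : k < n)
    (G : Matrix (Fin n) (Fin k) (Polynomial F))
    (hG : Function.Injective G.mulVecLin)
    (hprime : RightPrime G)
    (hδ : (Finset.univ.sup fun r : Fin k ↪ Fin n => ((G.submatrix r id).det).natDegree) = δ)
    (hL : L = δ / k + δ / (n - k))
    (hMDP : ∀ j ≤ L, colDist (LinearMap.range G.mulVecLin) j = (n - k) * (j + 1) + 1)
    (E : ℕ → Finset (Fin n))
    (hwin : ∀ i : ℕ, (∑ l ∈ Finset.range (L + 1), (E (i + l)).card) ≤ (L + 1) * (n - k)) :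
    ∀ v ∈ LinearMap.range G.mulVecLin, ∀ w ∈ LinearMap.range G.mulVecLin,
      (∀ (i : ℕ) (b : Fin n), b ∉ E i → (v b).coeff i = (w b).coeff i) → v = w := by
  intro v hv w hw hagree
  by_contra hne
  obtain ⟨xv, hxv⟩ := hv
  obtain ⟨xw, hxw⟩ := hw
  set u : Fin n → Polynomial F := v - w with hu
  have hune : u ≠ 0 := sub_ne_zero.mpr hne
  have humv : G.mulVec (xv - xw) = u := by
    rw [hu, ← hxv, ← hxw, ← map_sub, Matrix.mulVecLin_apply]
  -- erased support of u
  have husupp : ∀ i b, b ∉ E i → (u b).coeff i = 0 := by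
    intro i b hb
    simp only [hu, Pi.sub_apply, Polynomial.coeff_sub]
    rw [hagree i b hb, sub_self]
  -- least index with a nonzero coefficient
  have hex : ∃ i, ∃ b, (u b).coeff i ≠ 0 := by
    obtain ⟨b, hb⟩ : ∃ b, u b ≠ 0 := by
      by_contra h; push_neg at h; exact hune (funext h)
    obtain ⟨i, hi⟩ : ∃ i, (u b).coeff i ≠ 0 := by
      by_contra h; push_neg at h
      exact hb (Polynomial.ext h)
    exact ⟨i, b, hi⟩
  set i₀ := Nat.find hex with hi₀
  obtain ⟨b₀, hb₀⟩ := Nat.find_spec hex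
  have hlow : ∀ b t, t < i₀ → (G.mulVec (xv - xw) b).coeff t = 0 := by
    intro b t ht
    rw [humv]
    have := Nat.find_min hex ht
    push_neg at this
    exact this b
  obtain ⟨x', hx'⟩ := rightPrime_div_pow G hprime i₀ (xv - xw) hlow
  set u' : Fin n → Polynomial F := G.mulVec x' with hu'
  have hshift : ∀ b, u b = (X : Polynomial F) ^ i₀ * u' b := by
    intro b
    rw [← humv]
    simp only [Matrix.mulVec, dotProduct, hu']
    rw [Finset.mul_sum]
    exact Finset.sum_congr rfl fun i _ => by rw [hx' i]; ring
  have hcoeffshift : ∀ b t, (u b).coeff (i₀ + t) = (u' b).coeff t := by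
    intro b t
    rw [hshift b, add_comm i₀ t, Polynomial.coeff_X_pow_mul]
  -- u' is a codeword with nonzero constant coefficient vector
  have hu'mem : u' ∈ LinearMap.range G.mulVecLin :=
    ⟨x', by rw [Matrix.mulVecLin_apply]⟩
  have hu'0 : (fun b => (u' b).coeff 0) ≠ (0 : Fin n → F) := by
    intro h
    apply hb₀
    have := congrFun h b₀
    simp only [Pi.zero_apply] at this
    have h2 := hcoeffshift b₀ 0
    rw [Nat.add_zero] at h2
    rw [h2, this]
  -- the weight of the first L+1 coefficient vectors of u'
  set d : ℕ := ∑ t ∈ Finset.range (L + 1), hammingNorm (fun b => (u' b).coeff t) with hd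
  have hmem : d ∈ { d : ℕ | ∃ v ∈ LinearMap.range G.mulVecLin,
      (fun b => (v b).coeff 0) ≠ (0 : Fin n → F) ∧
      d = ∑ t ∈ Finset.range (L + 1), hammingNorm (fun b => (v b).coeff t) } :=
    ⟨u', hu'mem, hu'0, rfl⟩
  have hlb : (n - k) * (L + 1) + 1 ≤ d := by
    have := Nat.sInf_le hmem
    rwa [show sInf { d : ℕ | ∃ v ∈ LinearMap.range G.mulVecLin,
      (fun b => (v b).coeff 0) ≠ (0 : Fin n → F) ∧
      d = ∑ t ∈ Finset.range (L + 1), hammingNorm (fun b => (v b).coeff t) }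
        = colDist (LinearMap.range G.mulVecLin) L from rfl, hMDP L le_rfl] at this
  -- upper bound from the erasure pattern
  have hub : d ≤ (L + 1) * (n - k) := by
    have hterm : ∀ t ∈ Finset.range (L + 1),
        hammingNorm (fun b => (u' b).coeff t) ≤ (E (i₀ + t)).card := by
      intro t _
      unfold hammingNorm
      apply Finset.card_le_card
      intro b hb
      rw [Finset.mem_filter] at hb
      by_contra hbE
      apply hb.2
      have := husupp (i₀ + t) b hbE
      rwa [hcoeffshift b t] at this
    calc d ≤ ∑ t ∈ Finset.range (L + 1), (E (i₀ + t)).card :=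
          Finset.sum_le_sum hterm
      _ ≤ (L + 1) * (n - k) := hwin i₀
  have : (n - k) * (L + 1) = (L + 1) * (n - k) := mul_comm _ _
  omega
end

section
/- Suppose G₀^{(2)}(z₂) and G₀^{(1)}(z₁) generate an (n,k,δ₁) and an (n,k,δ₂) MDP convolutional code respectively, with L₁ = ⌊δ₁/k⌋ + ⌊δ₁/(n−k)⌋ and L₂ = ⌊δ₂/k⌋ + ⌊δ₂/(n−k)⌋. If in a square region of size (L₁+1)n × (L₂+1)n of a 2D codeword (with no erasures outside the square) there are at most (L₁+L₂+2)(n−k) − (n−1) erasures, then the 2D decoding algorithm (alternately decoding rows and columns with the two MDP codes) corrects all erasures regardless of their location. -/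
open Polynomial Matrix

theorem constCoeff_inj {F : Type*} [Field F] {n k : ℕ}
    (G : Matrix (Fin n) (Fin k) (Polynomial F)) (hp : RightPrime G)
    (x : Fin k → F) (hx : ∀ a, ∑ c, (G a c).coeff 0 * x c = 0) : ∀ c, x c = 0 := by
  by_contra h
  push_neg at h
  obtain ⟨c₀, hc₀⟩ := h
  set M : Matrix (Fin k) (Fin k) F := (1 : Matrix (Fin k) (Fin k) F).updateCol c₀ x with hM
  have hdet : M.det = x c₀ := by
    rw [hM, ← Matrix.cramer_apply, Matrix.cramer_one]
    rfl
  set X' : Matrix (Fin k) (Fin k) (Polynomial F) := M.map (C : F → Polynomial F) with hX'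
  have hdet' : X'.det = C (x c₀) := by
    rw [hX', ← RingHom.mapMatrix_apply, ← RingHom.map_det, hdet]
  have hXunit : IsUnit X'.det := by
    rw [hdet', Polynomial.isUnit_C]
    exact (isUnit_iff_ne_zero).mpr hc₀
  have hcol0 : ∀ a, ((G * X') a c₀).coeff 0 = 0 := by
    intro a
    rw [Matrix.mul_apply, Polynomial.finset_sum_coeff]
    have : ∀ c, (G a c * X' c c₀).coeff 0 = (G a c).coeff 0 * x c := by
      intro c
      have : X' c c₀ = C (x c) := by
        simp [hX', hM, Matrix.map_apply, Matrix.updateCol_self]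
      rw [this, Polynomial.coeff_mul_C]
    rw [Finset.sum_congr rfl (fun c _ => this c)]
    exact hx a
  set B : Matrix (Fin n) (Fin k) (Polynomial F) :=
    (G * X').updateCol c₀ (fun a => ((G * X') a c₀).divX) with hB
  set D : Matrix (Fin k) (Fin k) (Polynomial F) :=
    Matrix.diagonal (fun c => if c = c₀ then (Polynomial.X : Polynomial F) else 1) with hD
  have hBD : B * D = G * X' := by
    apply Matrix.ext
    intro a c
    rw [hD, Matrix.mul_diagonal]
    by_cases hc : c = c₀
    · subst hc
      rw [if_pos rfl, hB, Matrix.updateCol_self, mul_comm]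
      have := Polynomial.X_mul_divX_add ((G * X') a c)
      rw [hcol0 a, map_zero, add_zero] at this
      exact this
    · rw [if_neg hc, mul_one, hB, Matrix.updateCol_ne hc]
  have hGeq : G = B * (D * X'⁻¹) := by
    have h1 : G * (X' * X'⁻¹) = G := by
      rw [Matrix.mul_nonsing_inv _ hXunit, Matrix.mul_one]
    calc G = G * (X' * X'⁻¹) := h1.symm
    _ = (G * X') * X'⁻¹ := by rw [Matrix.mul_assoc]
    _ = (B * D) * X'⁻¹ := by rw [hBD]
    _ = B * (D * X'⁻¹) := by rw [Matrix.mul_assoc]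
  have hu := hp B (D * X'⁻¹) hGeq
  rw [Matrix.isUnit_iff_isUnit_det, Matrix.det_mul] at hu
  have hdD : D.det = (Polynomial.X : Polynomial F) := by
    rw [hD, Matrix.det_diagonal]
    simp
  rw [hdD] at hu
  exact Polynomial.not_isUnit_X (isUnit_of_mul_isUnit_left hu)

theorem mulVec_coeff {F : Type*} [Field F] {n k : ℕ}
    (G : Matrix (Fin n) (Fin k) (Polynomial F)) (y : Fin k → Polynomial F)
    (a : Fin n) (t : ℕ) (hlow : ∀ q < t, ∀ c, (y c).coeff q = 0) :
    (G.mulVec y a).coeff t = ∑ c, (G a c).coeff 0 * (y c).coeff t := by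
  have h1 : G.mulVec y a = ∑ c, G a c * y c := by
    simp [Matrix.mulVec, dotProduct]
  rw [h1, Polynomial.finset_sum_coeff]
  refine Finset.sum_congr rfl (fun c _ => ?_)
  rw [Polynomial.coeff_mul]
  refine Finset.sum_eq_single_of_mem (0, t) (by simp) ?_
  rintro ⟨p, q⟩ hmem hne
  have hpq : p + q = t := Finset.HasAntidiagonal.mem_antidiagonal.mp hmem
  have hq : q < t := by
    rcases Nat.lt_or_ge q t with h | h
    · exact h
    · exfalso; apply hne
      have : q = t := le_antisymm (by omega) h
      subst this
      have : p = 0 := by omega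
      subst this; rfl
  rw [hlow q hq c, mul_zero]

theorem shift_vanish {F : Type*} [Field F] {n k : ℕ}
    (G : Matrix (Fin n) (Fin k) (Polynomial F)) (hp : RightPrime G)
    (y : Fin k → Polynomial F) (t₀ : ℕ)
    (h : ∀ t < t₀, ∀ a, (G.mulVec y a).coeff t = 0) :
    ∀ t < t₀, ∀ c, (y c).coeff t = 0 := by
  intro t
  induction t using Nat.strong_induction_on with
  | _ t ih =>
    intro ht c
    have hlow : ∀ q < t, ∀ c, (y c).coeff q = 0 := fun q hq => ih q hq (hq.trans ht)
    exact constCoeff_inj G hp (fun c => (y c).coeff t)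
      (fun a => by rw [← mulVec_coeff G y a t hlow]; exact h t ht a) c

theorem oneD_weight {F : Type*} [Field F] [DecidableEq F] {n k : ℕ}
    (G : Matrix (Fin n) (Fin k) (Polynomial F)) (hp : RightPrime G) (L d : ℕ)
    (hMDP : colDist (LinearMap.range G.mulVecLin) L = d)
    (y : Fin k → Polynomial F) (t₀ : ℕ)
    (ht₀ : ∃ a, (G.mulVec y a).coeff t₀ ≠ 0)
    (hlow : ∀ t < t₀, ∀ a, (G.mulVec y a).coeff t = 0) :
    d ≤ ∑ t ∈ Finset.range (L + 1), hammingNorm (fun a => (G.mulVec y a).coeff (t + t₀)) := by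
  have hylow := shift_vanish G hp y t₀ hlow
  have hdvd : ∀ c, (Polynomial.X : Polynomial F) ^ t₀ ∣ y c :=
    fun c => Polynomial.X_pow_dvd_iff.mpr (fun q hq => hylow q hq c)
  choose y' hy' using hdvd
  set w : Fin n → Polynomial F := G.mulVec y' with hwdef
  have hw : ∀ a, G.mulVec y a = Polynomial.X ^ t₀ * w a := by
    intro a
    have h1 : G.mulVec y a = ∑ c, G a c * y c := by simp [Matrix.mulVec, dotProduct]
    have h2 : w a = ∑ c, G a c * y' c := by simp [hwdef, Matrix.mulVec, dotProduct]
    rw [h1, h2, Finset.mul_sum]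
    refine Finset.sum_congr rfl (fun c _ => ?_)
    rw [hy' c]; ring
  have hcoeff : ∀ a t, (G.mulVec y a).coeff (t + t₀) = (w a).coeff t := by
    intro a t
    rw [hw a, Polynomial.coeff_X_pow_mul]
  have hw0 : (fun a => (w a).coeff 0) ≠ (0 : Fin n → F) := by
    obtain ⟨a, ha⟩ := ht₀
    intro hz
    apply ha
    rw [show t₀ = 0 + t₀ by omega, hcoeff a 0]
    exact congrFun hz a
  have hmem : w ∈ LinearMap.range G.mulVecLin := ⟨y', by rw [Matrix.mulVecLin_apply]⟩
  have hle : colDist (LinearMap.range G.mulVecLin) L ≤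
      ∑ t ∈ Finset.range (L + 1), hammingNorm (fun a => (w a).coeff t) :=
    Nat.sInf_le ⟨w, hmem, hw0, rfl⟩
  rw [hMDP] at hle
  refine hle.trans (le_of_eq ?_)
  refine Finset.sum_congr rfl (fun t _ => ?_)
  congr 1
  funext a
  exact (hcoeff a t).symm

theorem count_lemma {F : Type*} [Field F] [DecidableEq F] {n k : ℕ}
    (G : Matrix (Fin n) (Fin k) (Polynomial F)) (hp : RightPrime G)
    (hinj : Function.Injective G.mulVecLin) (L d : ℕ)
    (hMDP : colDist (LinearMap.range G.mulVecLin) L = d)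
    (y : Fin k → Polynomial F) (hy : y ≠ 0)
    (E' : Finset (ℕ × Fin n))
    (hsup : ∀ t b, (G.mulVec y b).coeff t ≠ 0 → (t, b) ∈ E') :
    d ≤ E'.card := by
  have hvne : G.mulVec y ≠ 0 := by
    intro hz
    apply hy
    apply hinj
    rw [Matrix.mulVecLin_apply, hz, map_zero]
  have hTne : {t : ℕ | ∃ b, (G.mulVec y b).coeff t ≠ 0}.Nonempty := by
    obtain ⟨b, hb⟩ : ∃ b, G.mulVec y b ≠ 0 := Function.ne_iff.mp hvne
    have : ∃ t, (G.mulVec y b).coeff t ≠ 0 := by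
      by_contra hc
      push_neg at hc
      exact hb (Polynomial.ext hc)
    obtain ⟨t, ht⟩ := this

    exact ⟨t, b, ht⟩
  set t₀ := sInf {t : ℕ | ∃ b, (G.mulVec y b).coeff t ≠ 0} with ht₀def
  have ht₀ : ∃ b, (G.mulVec y b).coeff t₀ ≠ 0 := Nat.sInf_mem hTne
  have hlow : ∀ t < t₀, ∀ b, (G.mulVec y b).coeff t = 0 := by
    intro t ht b
    by_contra hne
    have h1 : t₀ ≤ t := Nat.sInf_le (⟨b, hne⟩ : t ∈ {t : ℕ | ∃ b, (G.mulVec y b).coeff t ≠ 0})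
    omega
  have key := oneD_weight G hp L d hMDP y t₀ ht₀ hlow
  set s : ℕ → Finset (ℕ × Fin n) := fun t =>
    (Finset.univ.filter fun b => (G.mulVec y b).coeff (t + t₀) ≠ 0).image
      (fun b => (t + t₀, b)) with hsdef
  have hcards : ∀ t, (s t).card = hammingNorm (fun b => (G.mulVec y b).coeff (t + t₀)) := by
    intro t
    rw [hsdef]
    rw [Finset.card_image_of_injective _ (fun b b' h => (Prod.ext_iff.mp h).2)]
    rfl
  have hdisj : ∀ t ∈ Finset.range (L + 1), ∀ t' ∈ Finset.range (L + 1), t ≠ t' →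
      Disjoint (s t) (s t') := by
    intro t _ t' _ hne
    simp only [Finset.disjoint_left, hsdef, Finset.mem_image, Finset.mem_filter]
    rintro ⟨j, b⟩ ⟨b1, _, h1⟩ ⟨b2, _, h2⟩
    apply hne
    have := (Prod.ext_iff.mp h1).1.trans (Prod.ext_iff.mp h2).1.symm
    omega
  have hbU : ((Finset.range (L + 1)).biUnion s).card =
      ∑ t ∈ Finset.range (L + 1), (s t).card := Finset.card_biUnion hdisj
  have hsubE : (Finset.range (L + 1)).biUnion s ⊆ E' := by
    intro e he
    obtain ⟨t, _, he⟩ := Finset.mem_biUnion.mp he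
    rw [hsdef] at he
    obtain ⟨b, hb, rfl⟩ := Finset.mem_image.mp he
    exact hsup _ _ (Finset.mem_filter.mp hb).2
  calc d ≤ ∑ t ∈ Finset.range (L + 1), hammingNorm (fun b => (G.mulVec y b).coeff (t + t₀)) := key
  _ = ((Finset.range (L + 1)).biUnion s).card := by
      rw [hbU]; exact (Finset.sum_congr rfl (fun t _ => (hcards t).symm))
  _ ≤ E'.card := Finset.card_le_card hsubE

noncomputable def innerCoeff {F : Type*} [Semiring F] (j : ℕ)
    (p : Polynomial (Polynomial F)) : Polynomial F :=
  p.sum fun i a => Polynomial.monomial i (a.coeff j)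

theorem innerCoeff_coeff {F : Type*} [Semiring F] (j i : ℕ) (p : Polynomial (Polynomial F)) :
    (innerCoeff j p).coeff i = (p.coeff i).coeff j := by
  rw [innerCoeff, Polynomial.sum, Polynomial.finset_sum_coeff]
  simp only [Polynomial.coeff_monomial]
  rw [Finset.sum_ite_eq' p.support i (fun i' => ((p.coeff i').coeff j))]
  by_cases h : i ∈ p.support
  · rw [if_pos h]
  · rw [if_neg h, Polynomial.notMem_support_iff.mp h, Polynomial.coeff_zero]
/-- Let `C = Im G(z₁,z₂)` be a 2D convolutional code (bivariate polynomials
modelled as `F[z₂][z₁]`), such that `G₀^{(1)}(z₁) = ∑_i G_{i0} z₁^i` and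
`G₀^{(2)}(z₂) = ∑_j G_{0j} z₂^j` generate an `(n,k,δ₁)` and an `(n,k,δ₂)` MDP (noncatastrophic)
convolutional code, respectively, and set `Lᵢ = ⌊δᵢ/k⌋ + ⌊δᵢ/(n−k)⌋`. If all erasures lie in
a square region of `(L₁+1) × (L₂+1)` coefficient vectors (i.e. `(L₁+1)n × (L₂+1)n` symbols,
with no erasures outside it) and their number is at most `(L₁+L₂+2)(n−k) − (n−1)`, then all
erasures are corrected regardless of their location: any two codewords agreeing on all
non-erased coefficient components are equal. -/
theorem twoD_square_erasure_correction {F : Type*} [Field F] [DecidableEq F]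
    {n k δ₁ δ₂ L₁ L₂ : ℕ} (hk0 : 0 < k) (hk : k < n)
    (G : Matrix (Fin n) (Fin k) (Polynomial (Polynomial F)))
    (hG : Function.Injective G.mulVecLin)
    -- `G₀^{(1)}(z₁)`: the coefficient of `z₂^0`, a polynomial matrix in `z₁`
    (G01 : Matrix (Fin n) (Fin k) (Polynomial F))
    (hG01 : G01 = fun a c => (G a c).map Polynomial.constantCoeff)
    -- `G₀^{(2)}(z₂)`: the coefficient of `z₁^0`, a polynomial matrix in `z₂`
    (G02 : Matrix (Fin n) (Fin k) (Polynomial F))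
    (hG02 : G02 = fun a c => (G a c).coeff 0)
    (hG01inj : Function.Injective G01.mulVecLin)
    (hG02inj : Function.Injective G02.mulVecLin)
    (hG01prime : RightPrime G01) (hG02prime : RightPrime G02)
    (hδ₁ : (Finset.univ.sup fun r : Fin k ↪ Fin n => ((G01.submatrix r id).det).natDegree) = δ₁)
    (hδ₂ : (Finset.univ.sup fun r : Fin k ↪ Fin n => ((G02.submatrix r id).det).natDegree) = δ₂)
    (hL₁ : L₁ = δ₁ / k + δ₁ / (n - k))
    (hL₂ : L₂ = δ₂ / k + δ₂ / (n - k))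
    (hMDP1 : ∀ j ≤ L₁, colDist (LinearMap.range G01.mulVecLin) j = (n - k) * (j + 1) + 1)
    (hMDP2 : ∀ j ≤ L₂, colDist (LinearMap.range G02.mulVecLin) j = (n - k) * (j + 1) + 1)
    (E : Finset (ℕ × ℕ × Fin n)) (i₀ j₀ : ℕ)
    (hsquare : ∀ e ∈ E, i₀ ≤ e.1 ∧ e.1 ≤ i₀ + L₁ ∧ j₀ ≤ e.2.1 ∧ e.2.1 ≤ j₀ + L₂)
    (hcard : E.card + (n - 1) ≤ (L₁ + L₂ + 2) * (n - k)) :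
    ∀ v ∈ LinearMap.range G.mulVecLin, ∀ w ∈ LinearMap.range G.mulVecLin,
      (∀ (i j : ℕ) (b : Fin n), (i, j, b) ∉ E →
        ((v b).coeff i).coeff j = ((w b).coeff i).coeff j) → v = w := by
  intro v hv w hw hagree
  by_contra hne
  obtain ⟨xv, hxv⟩ := hv
  obtain ⟨xw, hxw⟩ := hw
  set x : Fin k → Polynomial (Polynomial F) := xv - xw with hxdef
  set u : Fin n → Polynomial (Polynomial F) := fun b => v b - w b with hudef
  have hu : ∀ b, u b = ∑ c, G b c * x c := by
    intro b
    calc u b = (∑ c, G b c * xv c) - (∑ c, G b c * xw c) := by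
          rw [hudef, ← hxv, ← hxw]
          simp [Matrix.mulVecLin_apply, Matrix.mulVec, dotProduct]
    _ = ∑ c, G b c * x c := by
          rw [← Finset.sum_sub_distrib]
          exact Finset.sum_congr rfl fun c _ => by rw [hxdef, Pi.sub_apply, mul_sub]
  have hune : u ≠ 0 := by
    intro h
    apply hne
    funext b
    have := congrFun h b
    rw [hudef] at this
    exact sub_eq_zero.mp this
  have hxne : x ≠ 0 := by
    intro h
    apply hune
    funext b
    rw [hu b, h]
    simp
  have hE : ∀ i j b, ((u b).coeff i).coeff j ≠ 0 → (i, j, b) ∈ E := by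
    intro i j b hne0
    by_contra hnotin
    apply hne0
    have hij := hagree i j b hnotin
    rw [hudef]
    simp only [Polynomial.coeff_sub, hij, sub_self]
  -- the row
  have hS₁ : {q : ℕ | ∃ c, (x c).coeff q ≠ 0}.Nonempty := by
    obtain ⟨c, hc⟩ := Function.ne_iff.mp hxne
    have : ∃ q, (x c).coeff q ≠ 0 := by
      by_contra hcon
      push_neg at hcon
      exact hc (Polynomial.ext hcon)
    obtain ⟨q, hq⟩ := this
    exact ⟨q, c, hq⟩
  set q₀ := sInf {q : ℕ | ∃ c, (x c).coeff q ≠ 0} with hq₀def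
  have hq₀mem : ∃ c, (x c).coeff q₀ ≠ 0 := Nat.sInf_mem hS₁
  have hq₀min : ∀ q < q₀, ∀ c, (x c).coeff q = 0 := by
    intro q hq c
    by_contra hcon
    have : q₀ ≤ q := Nat.sInf_le ⟨c, hcon⟩
    omega
  set xq : Fin k → Polynomial F := fun c => (x c).coeff q₀ with hxqdef
  have hxqne : xq ≠ 0 := by
    obtain ⟨c, hc⟩ := hq₀mem
    exact fun h => hc (congrFun h c)
  have hrow : ∀ b, G02.mulVec xq b = (u b).coeff q₀ := by
    intro b
    rw [hu b, Polynomial.finset_sum_coeff]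
    have hl : G02.mulVec xq b = ∑ c, (G b c).coeff 0 * (x c).coeff q₀ := by
      simp [Matrix.mulVec, dotProduct, hG02, hxqdef]
    rw [hl]
    refine Finset.sum_congr rfl fun c _ => ?_
    rw [Polynomial.coeff_mul]
    have hmem0 : ((0 : ℕ), q₀) ∈ Finset.HasAntidiagonal.antidiagonal q₀ := Finset.HasAntidiagonal.mem_antidiagonal.mpr (zero_add _)
    symm
    refine Finset.sum_eq_single_of_mem (0, q₀) hmem0 ?_
    rintro ⟨p, q⟩ hmem hne2
    have hpq : p + q = q₀ := Finset.HasAntidiagonal.mem_antidiagonal.mp hmem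
    have hqlt : q < q₀ := by
      rcases Nat.lt_or_ge q q₀ with h | h
      · exact h
      · exfalso
        apply hne2
        have hq2 : q = q₀ := by omega
        have hp2 : p = 0 := by omega
        rw [hq2, hp2]
    rw [hq₀min q hqlt c, mul_zero]
  have hrowcard : (n - k) * (L₂ + 1) + 1 ≤ (E.filter (fun e => e.1 = q₀)).card := by
    have hcl := count_lemma G02 hG02prime hG02inj L₂ _ (hMDP2 L₂ le_rfl) xq hxqne
      ((E.filter (fun e => e.1 = q₀)).image (fun e => (e.2.1, e.2.2)))
      (by
        intro t b hcoeff
        have h0 : ((u b).coeff q₀).coeff t ≠ 0 := by rw [← hrow b]; exact hcoeff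
        exact Finset.mem_image.mpr ⟨(q₀, t, b),
          Finset.mem_filter.mpr ⟨hE q₀ t b h0, rfl⟩, rfl⟩)
    exact hcl.trans Finset.card_image_le
  -- the column
  have hS₂ : {j : ℕ | ∃ c q, ((x c).coeff q).coeff j ≠ 0}.Nonempty := by
    obtain ⟨q, c, hq⟩ := hS₁
    have : ∃ j, ((x c).coeff q).coeff j ≠ 0 := by
      by_contra hcon
      push_neg at hcon
      exact hq (Polynomial.ext hcon)
    obtain ⟨j, hj⟩ := this
    exact ⟨j, c, q, hj⟩
  set j₁ := sInf {j : ℕ | ∃ c q, ((x c).coeff q).coeff j ≠ 0} with hj₁def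
  have hj₁mem : ∃ c q, ((x c).coeff q).coeff j₁ ≠ 0 := Nat.sInf_mem hS₂
  have hj₁min : ∀ j < j₁, ∀ c q, ((x c).coeff q).coeff j = 0 := by
    intro j hj c q
    by_contra hcon
    have : j₁ ≤ j := Nat.sInf_le ⟨c, q, hcon⟩
    omega
  set xc : Fin k → Polynomial F := fun c => innerCoeff j₁ (x c) with hxcdef
  have hxcne : xc ≠ 0 := by
    obtain ⟨c, q, hc⟩ := hj₁mem
    intro h
    apply hc
    have h' : innerCoeff j₁ (x c) = 0 := by simpa [hxcdef] using congrFun h c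
    calc ((x c).coeff q).coeff j₁ = (innerCoeff j₁ (x c)).coeff q := (innerCoeff_coeff _ _ _).symm
    _ = 0 := by rw [h', Polynomial.coeff_zero]
  have hcol : ∀ b i, (G01.mulVec xc b).coeff i = ((u b).coeff i).coeff j₁ := by
    intro b i
    have hl : G01.mulVec xc b = ∑ c, G01 b c * xc c := by
      simp [Matrix.mulVec, dotProduct]
    rw [hl, hu b, Polynomial.finset_sum_coeff, Polynomial.finset_sum_coeff,
      Polynomial.finset_sum_coeff]
    refine Finset.sum_congr rfl fun c _ => ?_
    rw [Polynomial.coeff_mul, Polynomial.coeff_mul, Polynomial.finset_sum_coeff]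
    refine Finset.sum_congr rfl fun pq hpq => ?_
    rw [Polynomial.coeff_mul]
    have hmem0 : ((0 : ℕ), j₁) ∈ Finset.HasAntidiagonal.antidiagonal j₁ := Finset.HasAntidiagonal.mem_antidiagonal.mpr (zero_add _)
    have e1 : (∑ st ∈ Finset.HasAntidiagonal.antidiagonal j₁,
        ((G b c).coeff pq.1).coeff st.1 * ((x c).coeff pq.2).coeff st.2) =
        ((G b c).coeff pq.1).coeff 0 * ((x c).coeff pq.2).coeff j₁ := by
      refine Finset.sum_eq_single_of_mem (0, j₁) hmem0 ?_
      rintro ⟨s, t⟩ hmem hne2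
      have hst : s + t = j₁ := Finset.HasAntidiagonal.mem_antidiagonal.mp hmem
      have htlt : t < j₁ := by
        rcases Nat.lt_or_ge t j₁ with h | h
        · exact h
        · exfalso
          apply hne2
          have ht2 : t = j₁ := by omega
          have hs2 : s = 0 := by omega
          rw [ht2, hs2]
      rw [hj₁min t htlt c pq.2, mul_zero]
    rw [e1, hG01, hxcdef]
    simp only [Polynomial.coeff_map, innerCoeff_coeff]
    rfl
  have hcolcard : (n - k) * (L₁ + 1) + 1 ≤ (E.filter (fun e => e.2.1 = j₁)).card := by
    have hcl := count_lemma G01 hG01prime hG01inj L₁ _ (hMDP1 L₁ le_rfl) xc hxcne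
      ((E.filter (fun e => e.2.1 = j₁)).image (fun e => (e.1, e.2.2)))
      (by
        intro t b hcoeff
        have h0 : ((u b).coeff t).coeff j₁ ≠ 0 := by rw [← hcol b t]; exact hcoeff
        exact Finset.mem_image.mpr ⟨(t, j₁, b),
          Finset.mem_filter.mpr ⟨hE t j₁ b h0, rfl⟩, rfl⟩)
    exact hcl.trans Finset.card_image_le
  -- counting
  set Er := E.filter (fun e => e.1 = q₀) with hErdef
  set Ec := E.filter (fun e => e.2.1 = j₁) with hEcdef
  have hinter : (Er ∩ Ec).card ≤ n := by
    have hsub : Er ∩ Ec ⊆ Finset.univ.image (fun b : Fin n => (q₀, j₁, b)) := by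
      intro e he
      obtain ⟨h1, h2⟩ := Finset.mem_inter.mp he
      have e1 : e.1 = q₀ := (Finset.mem_filter.mp h1).2
      have e2 : e.2.1 = j₁ := (Finset.mem_filter.mp h2).2
      refine Finset.mem_image.mpr ⟨e.2.2, Finset.mem_univ _, ?_⟩
      obtain ⟨a, b, c⟩ := e
      simp_all
    calc (Er ∩ Ec).card ≤ (Finset.univ.image (fun b : Fin n => (q₀, j₁, b))).card :=
          Finset.card_le_card hsub
    _ ≤ (Finset.univ : Finset (Fin n)).card := Finset.card_image_le
    _ = n := by simp
  have hunion : Er.card + Ec.card ≤ E.card + n := by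
    have h1 := Finset.card_union_add_card_inter Er Ec
    have h2 : (Er ∪ Ec).card ≤ E.card :=
      Finset.card_le_card (Finset.union_subset (Finset.filter_subset _ _)
        (Finset.filter_subset _ _))
    omega
  have h962 : (L₁ + L₂ + 2) * (n - k) = (n - k) * (L₁ + 1) + (n - k) * (L₂ + 1) := by ring
  rw [h962] at hcard
  have hn1 : 1 ≤ n := by omega
  revert hcard hrowcard hcolcard
  generalize (n - k) * (L₁ + 1) = P
  generalize (n - k) * (L₂ + 1) = Q
  intro hcard hrowcard hcolcard
  omega
end
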